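/- Let X be a set of feasible decisions in a type α, let z : Fin p → α → ℝ, fix q : Fin p, parameters ε : Fin p → ℝ, and penalty weights w : Fin p → ℝ with w k > 0 for all k ≠ q. Consider the elastic ε-constraint problem: over triples (x, e⁻, e⁺) with x ∈ X, e⁻ k ≥ 0, e⁺ k ≥ 0, and z k x + e⁻ k − e⁺ k = ε k for all k ≠ q, maximize z q x − ∑_{k ≠ q} w k · e⁻ k. If (x*, e⁻*, e⁺*) is an optimal solution of this problem (i.e., a feasible triple whose objective value is greater than or equal to that of every feasible triple), then x* is a weakly efficient solution of the multi-objective maximization problem over X: there is no x ∈ X with z k x > z k x* for every k. -/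

import Mathlib

/-- Theorem 2 (Ehrgott & Ryan, 2003): an optimal solution of the elastic
ε-constraint problem is weakly efficient. -/
theorem elastic_epsilon_constraint_weakly_efficient
    {α : Type*} {p : ℕ}
    (X : Set α) (z : Fin p → α → ℝ) (q : Fin p) (ε : Fin p → ℝ)
    (w : Fin p → ℝ) (hw : ∀ k, k ≠ q → 0 < w k)
    (xstar : α) (eminus eplus : Fin p → ℝ)
    (hx : xstar ∈ X)
    (heminus : ∀ k, k ≠ q → 0 ≤ eminus k)
    (heplus : ∀ k, k ≠ q → 0 ≤ eplus k)
    (heq : ∀ k, k ≠ q → z k xstar + eminus k - eplus k = ε k)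
    (hopt : ∀ (x : α) (em ep : Fin p → ℝ),
      x ∈ X → (∀ k, k ≠ q → 0 ≤ em k) → (∀ k, k ≠ q → 0 ≤ ep k) →
      (∀ k, k ≠ q → z k x + em k - ep k = ε k) →
      z q x - ∑ k ∈ Finset.univ.erase q, w k * em k ≤
        z q xstar - ∑ k ∈ Finset.univ.erase q, w k * eminus k) :
    ¬ ∃ x ∈ X, ∀ k, z k xstar < z k x := by
  rintro ⟨x, hxX, hlt⟩
  set em : Fin p → ℝ := fun k => max (ε k - z k x) 0 with hem
  set ep : Fin p → ℝ := fun k => max (z k x - ε k) 0 with hep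
  have hemle : ∀ k, k ≠ q → em k ≤ eminus k := by
    intro k hk
    have h1 : eminus k = ε k - z k xstar + eplus k := by linarith [heq k hk]
    have : ε k - z k x ≤ eminus k := by
      have := hlt k; have := heplus k hk; linarith
    exact max_le this (heminus k hk)
  have hfeas := hopt x em ep hxX (fun k _ => le_max_right _ _)
    (fun k _ => le_max_right _ _) (by
      intro k hk
      simp only [hem, hep]
      rcases le_total (z k x) (ε k) with h | h
      · rw [max_eq_left (by linarith), max_eq_right (by linarith)]; ring
      · rw [max_eq_right (by linarith), max_eq_left (by linarith)]; ring)
  have hsum : ∑ k ∈ Finset.univ.erase q, w k * em k ≤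
      ∑ k ∈ Finset.univ.erase q, w k * eminus k := by
    apply Finset.sum_le_sum
    intro k hk
    have hkq : k ≠ q := Finset.ne_of_mem_erase hk
    exact mul_le_mul_of_nonneg_left (hemle k hkq) (hw k hkq).le
  have := hlt q
  linarith
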